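/- arXiv:1309.5553 — 2 statements merged into one kernel-verified Lean document; each statement's English description precedes it below -/
import Mathlib

section
/- Every hyperplane in a CAT(0) cube complex X separates X into exactly two connected components. -/
/-- A combinatorial CAT(0) cube complex, presented by its 1-skeleton.
By the theorem of Chepoi and Roller, the 1-skeleta of CAT(0) cube complexes
(cube complexes that are simply connected and whose vertex links are flag,
equivalently nonpositively curved in the sense of Gromov) are exactly the
median graphs, and a CAT(0) cube complex is determined by its 1-skeleton:
its cubes are exactly the induced subgraphs isomorphic to Boolean hypercubes. -/
structure CCC where
  V : Type
  graph : SimpleGraph V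
  conn : graph.Connected
  median : ∀ x y z : V, ∃! m : V,
    graph.dist x m + graph.dist m y = graph.dist x y ∧
    graph.dist y m + graph.dist m z = graph.dist y z ∧
    graph.dist x m + graph.dist m z = graph.dist x z

namespace CCC

variable (X : CCC)

/-- An embedded `n`-dimensional cube of the cube complex: vertices of the
Boolean cube `{0,1}^n` mapped injectively onto vertices of `X`, with
adjacency exactly between vertices differing in one coordinate. -/
def IsCubeEmb {n : ℕ} (c : (Fin n → Bool) → X.V) : Prop :=
  Function.Injective c ∧
    ∀ f g : Fin n → Bool,
      X.graph.Adj (c f) (c g) ↔ (Finset.univ.filter fun i => f i ≠ g i).card = 1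

/-- `u` and `v` are diagonally opposite vertices of a cube of `X`. -/
def SpansCube (u v : X.V) : Prop :=
  ∃ (n : ℕ) (c : (Fin n → Bool) → X.V),
    X.IsCubeEmb c ∧ c (fun _ => false) = u ∧ c (fun _ => true) = v

/-- The (metric) interval between two vertices. For two vertices spanning a
cube, this is exactly the vertex set of the (minimal) cube containing both. -/
def Interval (u v : X.V) : Set X.V :=
  {x | X.graph.dist u x + X.graph.dist x v = X.graph.dist u v}

/-- A set of vertices which is the vertex set of a cube of `X`. -/
def IsCubeSet (s : Set X.V) : Prop :=
  ∃ (n : ℕ) (c : (Fin n → Bool) → X.V), X.IsCubeEmb c ∧ s = Set.range c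

/-- The star `St(C)` of the cube `C` spanned by `u` and `v`: the union of all
cubes containing `C` as a subface. -/
def StarCube (u v : X.V) : Set X.V :=
  ⋃₀ {s | X.IsCubeSet s ∧ X.Interval u v ⊆ s}

/-- The star of a vertex: the union of all cubes containing it. -/
def StarV (v : X.V) : Set X.V := X.StarCube v v

/-- The (oriented) Djoković relation: the edges `(a,b)` and `(a',b')` are dual
to the same hyperplane, with `a` and `a'` on the same side of it. In a median
graph this is the relation "being opposite edges of a common square", extended
transitively (in median graphs the Djoković relation is already transitive). -/
def DjRel (a b a' b' : X.V) : Prop :=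
  X.graph.Adj a b ∧ X.graph.Adj a' b' ∧
    X.graph.dist a a' + 1 = X.graph.dist a b' ∧
    X.graph.dist b b' + 1 = X.graph.dist b a'

/-- The edges `(a,b)` and `(a',b')` are dual to the same hyperplane
(unoriented version). -/
def UDual (a b a' b' : X.V) : Prop := X.DjRel a b a' b' ∨ X.DjRel a b b' a'

/-- `x` lies in the halfspace of the hyperplane dual to the edge `(a,b)`
containing `a`. -/
def SideOf (a b x : X.V) : Prop := X.graph.dist x a < X.graph.dist x b

/-- The hyperplane dual to the edge `(a,b)` separates the vertices `x, y`. -/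
def Separates (a b x y : X.V) : Prop :=
  (X.SideOf a b x ∧ X.SideOf b a y) ∨ (X.SideOf b a x ∧ X.SideOf a b y)

/-- The hyperplanes dual to the edges `(a,b)` and `(a',b')` cross, i.e. they
pass through a common cube: there is a square with one pair of opposite edges
dual to the first hyperplane and one adjacent pair dual to the second. -/
def Cross (a b a' b' : X.V) : Prop :=
  ∃ w x y z : X.V,
    X.graph.Adj w x ∧ X.graph.Adj y z ∧ X.graph.Adj w y ∧ X.graph.Adj x z ∧
    X.UDual w x a b ∧ X.UDual w y a' b'

/-- The distance from the vertex `v` to the hyperplane `H` dual to the edge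
`(a,b)`, assuming `v` lies on the `a`-side: `d(v,H) = hDist v a b + 1/2`,
where `hDist v a b = min { d(v,x) | x in the halfspace not containing v } - 1`.
Distances between vertices here are measured in the normal-cube-path metric;
for a CAT(0) cube complex this minimum is realized on `N(H)` and agrees with
the corresponding graph-metric computation. -/
noncomputable def hDist (v a b : X.V) : ℕ :=
  sInf {n | ∃ x : X.V, X.SideOf b a x ∧ X.graph.dist v x = n} - 1

end CCC

namespace CCC

/-- The 1-skeleton of `X` with all edges dual to the hyperplane of the edge
`(a,b)` removed. -/
def deleteHyperplane (X : CCC) (a b : X.V) : SimpleGraph X.V where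
  Adj u v := X.graph.Adj u v ∧ ¬ X.UDual u v a b ∧ ¬ X.UDual v u a b
  symm := ⟨fun u v h => ⟨h.1.symm, h.2.2, h.2.1⟩⟩
  loopless := ⟨fun u h => X.graph.loopless.irrefl u h.1⟩



/-- Key step lemma: from the median axiom, for adjacent `u v` and any `x`,
the distances `d(x,u)` and `d(x,v)` differ by exactly one. -/
theorem step_lemma (X : CCC) {u v : X.V} (huv : X.graph.Adj u v) (x : X.V) :
    X.graph.dist x u + 1 = X.graph.dist x v ∨
    X.graph.dist x v + 1 = X.graph.dist x u := by
  obtain ⟨m, ⟨h1, h2, h3⟩, -⟩ := X.median x u v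
  have hd : X.graph.dist u v = 1 := SimpleGraph.dist_eq_one_iff_adj.mpr huv
  rw [hd] at h2
  rcases Nat.add_eq_one_iff.mp h2 with ⟨hmu, hmv⟩ | ⟨hmu, hmv⟩
  · have hm : u = m := (X.conn.dist_eq_zero_iff).mp hmu
    rw [← hm] at h3 hmv
    left
    omega
  · have hm : m = v := (X.conn.dist_eq_zero_iff).mp hmv
    rw [hm] at h1 hmu
    have hc : X.graph.dist v u = X.graph.dist u v := SimpleGraph.dist_comm
    right
    omega

/-- **Every hyperplane in a CAT(0) cube complex separates it into exactly two
components** (Niblo–Reeves, Proposition 2.7): removing from the 1-skeleton all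
edges dual to the hyperplane of the edge `(a,b)` leaves a graph whose
connected components are exactly two sets `A ∋ a` and `B ∋ b`. -/
theorem hyperplane_separates (X : CCC) (a b : X.V) (hab : X.graph.Adj a b) :
    ∃ A B : Set X.V, a ∈ A ∧ b ∈ B ∧ A ∩ B = ∅ ∧ A ∪ B = Set.univ ∧
      ∀ u v : X.V, (X.deleteHyperplane a b).Reachable u v ↔
        ((u ∈ A ∧ v ∈ A) ∨ (u ∈ B ∧ v ∈ B)) := by
  classical
  have dc : ∀ x y : X.V, X.graph.dist x y = X.graph.dist y x := fun _ _ => SimpleGraph.dist_comm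
  have hcover : ∀ x : X.V, X.graph.dist x a + 1 = X.graph.dist x b ∨
      X.graph.dist x b + 1 = X.graph.dist x a := fun x => X.step_lemma hab x
  refine ⟨{x | X.graph.dist x a < X.graph.dist x b},
          {x | X.graph.dist x b < X.graph.dist x a}, ?_, ?_, ?_, ?_, ?_⟩
  · show X.graph.dist a a < X.graph.dist a b
    have h0 : X.graph.dist a a = 0 := SimpleGraph.dist_self
    have h1 : X.graph.dist a b = 1 := SimpleGraph.dist_eq_one_iff_adj.mpr hab
    omega
  · show X.graph.dist b b < X.graph.dist b a
    have h0 : X.graph.dist b b = 0 := SimpleGraph.dist_self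
    have h1 : X.graph.dist b a = 1 := SimpleGraph.dist_eq_one_iff_adj.mpr hab.symm
    omega
  · ext x
    simp only [Set.mem_inter_iff, Set.mem_setOf_eq, Set.mem_empty_iff_false, iff_false]
    omega
  · ext x
    simp only [Set.mem_union, Set.mem_setOf_eq, Set.mem_univ, iff_true]
    rcases hcover x with h | h
    · left; omega
    · right; omega
  · -- edges of the deleted graph stay on the A-side
    have hedgeA : ∀ u v : X.V, (X.deleteHyperplane a b).Adj u v →
        X.graph.dist u a < X.graph.dist u b → X.graph.dist v a < X.graph.dist v b := by
      intro u v huv hu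
      by_contra hv
      push_neg at hv
      have hu' : X.graph.dist u a + 1 = X.graph.dist u b := by
        rcases hcover u with h | h <;> omega
      have hv' : X.graph.dist v b + 1 = X.graph.dist v a := by
        rcases hcover v with h | h <;> omega
      exact huv.2.1 (Or.inl ⟨huv.1, hab, hu', hv'⟩)
    have hedgeB : ∀ u v : X.V, (X.deleteHyperplane a b).Adj u v →
        X.graph.dist u b < X.graph.dist u a → X.graph.dist v b < X.graph.dist v a := by
      intro u v huv hu
      by_contra hv
      push_neg at hv
      have hv' : X.graph.dist v a < X.graph.dist v b := by
        rcases hcover v with h | h <;> omega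
      have := hedgeA v u huv.symm hv'
      omega
    -- edges inside the A-halfspace survive deletion
    have hAedge : ∀ u v : X.V, X.graph.Adj u v →
        X.graph.dist u a < X.graph.dist u b → X.graph.dist v a < X.graph.dist v b →
        (X.deleteHyperplane a b).Adj u v := by
      intro u v huv hu hv
      refine ⟨huv, ?_, ?_⟩
      · rintro (⟨-, -, h1, h2⟩ | ⟨-, -, h1, h2⟩) <;> omega
      · rintro (⟨-, -, h1, h2⟩ | ⟨-, -, h1, h2⟩) <;> omega
    have hBedge : ∀ u v : X.V, X.graph.Adj u v →
        X.graph.dist u b < X.graph.dist u a → X.graph.dist v b < X.graph.dist v a →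
        (X.deleteHyperplane a b).Adj u v := by
      intro u v huv hu hv
      refine ⟨huv, ?_, ?_⟩
      · rintro (⟨-, -, h1, h2⟩ | ⟨-, -, h1, h2⟩) <;> omega
      · rintro (⟨-, -, h1, h2⟩ | ⟨-, -, h1, h2⟩) <;> omega
    -- each point of A is reachable to a within A
    have hreachA : ∀ (n : ℕ) (v : X.V), X.graph.dist v a = n →
        X.graph.dist v a < X.graph.dist v b →
        (X.deleteHyperplane a b).Reachable v a := by
      intro n
      induction n with
      | zero =>
        intro v hn _
        have : v = a := (X.conn.dist_eq_zero_iff).mp hn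
        exact this ▸ SimpleGraph.Reachable.refl _
      | succ n ih =>
        intro v hn hv
        obtain ⟨p, hp⟩ := X.conn.exists_walk_length_eq_dist v a
        rw [hn] at hp
        cases p with
        | nil => simp at hp
        | @cons _ w _ h q =>
          simp only [SimpleGraph.Walk.length_cons, Nat.succ_inj] at hp
          have hwa : X.graph.dist w a ≤ n := hp ▸ SimpleGraph.dist_le q
          have hvw : X.graph.dist v w = 1 := SimpleGraph.dist_eq_one_iff_adj.mpr h
          have hge : X.graph.dist v a ≤ X.graph.dist v w + X.graph.dist w a :=
            X.conn.dist_triangle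
          have hwa' : X.graph.dist w a = n := by omega
          have hwA : X.graph.dist w a < X.graph.dist w b := by
            rcases hcover w with hc | hc
            · omega
            · exfalso
              have h1 : X.graph.dist v b ≤ X.graph.dist v w + X.graph.dist w b :=
                X.conn.dist_triangle
              have h2 : X.graph.dist v a + 1 = X.graph.dist v b := by
                rcases hcover v with h' | h' <;> omega
              omega
          exact ((hAedge v w h hv hwA).reachable).trans (ih w hwa' hwA)
    have hreachB : ∀ (n : ℕ) (v : X.V), X.graph.dist v b = n →
        X.graph.dist v b < X.graph.dist v a →
        (X.deleteHyperplane a b).Reachable v b := by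
      intro n
      induction n with
      | zero =>
        intro v hn _
        have : v = b := (X.conn.dist_eq_zero_iff).mp hn
        exact this ▸ SimpleGraph.Reachable.refl _
      | succ n ih =>
        intro v hn hv
        obtain ⟨p, hp⟩ := X.conn.exists_walk_length_eq_dist v b
        rw [hn] at hp
        cases p with
        | nil => simp at hp
        | @cons _ w _ h q =>
          simp only [SimpleGraph.Walk.length_cons, Nat.succ_inj] at hp
          have hwb : X.graph.dist w b ≤ n := hp ▸ SimpleGraph.dist_le q
          have hvw : X.graph.dist v w = 1 := SimpleGraph.dist_eq_one_iff_adj.mpr h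
          have hge : X.graph.dist v b ≤ X.graph.dist v w + X.graph.dist w b :=
            X.conn.dist_triangle
          have hwb' : X.graph.dist w b = n := by omega
          have hwB : X.graph.dist w b < X.graph.dist w a := by
            rcases hcover w with hc | hc
            · exfalso
              have h1 : X.graph.dist v a ≤ X.graph.dist v w + X.graph.dist w a :=
                X.conn.dist_triangle
              have h2 : X.graph.dist v b + 1 = X.graph.dist v a := by
                rcases hcover v with h' | h' <;> omega
              omega
            · omega
          have hadj : (X.deleteHyperplane a b).Adj v w := hBedge v w h hv hwB
          exact (hadj.reachable).trans (ih w hwb' hwB)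
    -- walks in the deleted graph stay on one side
    have hside : ∀ (u v : X.V), (X.deleteHyperplane a b).Walk u v →
        X.graph.dist v a < X.graph.dist v b → X.graph.dist u a < X.graph.dist u b := by
      intro u v p
      induction p with
      | nil => exact id
      | @cons x y _ h q ih =>
        intro hv
        have hy := ih hv
        by_contra hx
        push_neg at hx
        have hxB : X.graph.dist x b < X.graph.dist x a := by
          rcases hcover x with hc | hc <;> omega
        have := hedgeB x y h hxB
        omega
    intro u v
    constructor
    · intro hr
      obtain ⟨p⟩ := hr
      rcases hcover v with hcv | hcv
      · left
        have hvA : X.graph.dist v a < X.graph.dist v b := by omega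
        exact ⟨hside u v p hvA, hvA⟩
      · right
        have hvB : X.graph.dist v b < X.graph.dist v a := by omega
        refine ⟨?_, hvB⟩
        show X.graph.dist u b < X.graph.dist u a
        by_contra hu
        push_neg at hu
        have huA : X.graph.dist u a < X.graph.dist u b := by
          rcases hcover u with hc | hc <;> omega
        have := hside v u p.reverse huA
        omega
    · rintro (⟨hu, hv⟩ | ⟨hu, hv⟩)
      · exact ((hreachA _ u rfl hu).trans (hreachA _ v rfl hv).symm)
      · exact ((hreachB _ u rfl hu).trans (hreachB _ v rfl hv).symm)

end CCC
end

section
/- Let X be a CAT(0) cube complex, ṽ a vertex and H a hyperplane with d(ṽ, H) ≥ 3/2. Then there exists a hyperplane H' with d(ṽ, H') = 1/2 such that H' separates ṽ from H (i.e., ṽ and H lie in different halfspaces of H'). -/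
namespace CCC

variable (X : CCC)

lemma dist0 {u w : X.V} (h : X.graph.dist u w = 0) : u = w :=
  (X.conn.dist_eq_zero_iff).mp h

lemma dist_adj {u w : X.V} (h : X.graph.Adj u w) : X.graph.dist u w = 1 :=
  SimpleGraph.dist_eq_one_iff_adj.mpr h

lemma exists_step {u w : X.V} (h : X.graph.dist u w ≠ 0) :
    ∃ r : X.V, X.graph.Adj u r ∧ X.graph.dist r w + 1 = X.graph.dist u w := by
  obtain ⟨p, hp⟩ := (X.conn u w).exists_walk_length_eq_dist
  cases p with
  | nil => simp at h
  | @cons _ r _ hadj q =>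
    refine ⟨r, hadj, ?_⟩
    have h1 : X.graph.dist r w ≤ q.length := SimpleGraph.dist_le q
    have h2 : X.graph.dist u w ≤ X.graph.dist u r + X.graph.dist r w :=
      X.conn.dist_triangle
    have h3 : X.graph.dist u r = 1 := X.dist_adj hadj
    simp [SimpleGraph.Walk.length_cons] at hp
    omega

/-- parity / bipartiteness: distances to the two endpoints of an edge differ by one. -/
lemma parity {p q : X.V} (hpq : X.graph.Adj p q) (t : X.V) :
    X.graph.dist t p + 1 = X.graph.dist t q ∨ X.graph.dist t q + 1 = X.graph.dist t p := by
  obtain ⟨m, ⟨h1, h2, h3⟩, -⟩ := X.median t p q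
  have hd : X.graph.dist p q = 1 := X.dist_adj hpq
  have : X.graph.dist p m = 0 ∨ X.graph.dist m q = 0 := by omega
  rcases this with h | h
  · have e : p = m := X.dist0 h
    rw [← e] at h3
    left; omega
  · have e : m = q := X.dist0 h
    rw [e] at h1
    have hqp : X.graph.dist q p = 1 := X.dist_adj hpq.symm
    right; omega

/-- two vertices whose distances to some vertex differ by 2 are not adjacent. -/
lemma not_adj2 {c u t : X.V} (h : X.graph.dist u c + 2 = X.graph.dist t c) :
    ¬ X.graph.Adj u t := by
  intro hadj
  have := X.parity hadj c
  have c1 : X.graph.dist c u = X.graph.dist u c := SimpleGraph.dist_comm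
  have c2 : X.graph.dist c t = X.graph.dist t c := SimpleGraph.dist_comm
  omega

/-- two vertices with equal distances to some vertex are not adjacent. -/
lemma not_adj0 {c u t : X.V} (h : X.graph.dist u c = X.graph.dist t c) :
    ¬ X.graph.Adj u t := by
  intro hadj
  have := X.parity hadj c
  have c1 : X.graph.dist c u = X.graph.dist u c := SimpleGraph.dist_comm
  have c2 : X.graph.dist c t = X.graph.dist t c := SimpleGraph.dist_comm
  omega

lemma dist_two {u s t : X.V} (h1 : X.graph.Adj u s) (h2 : X.graph.Adj s t)
    (hne : u ≠ t) (hna : ¬ X.graph.Adj u t) : X.graph.dist u t = 2 := by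
  have t1 : X.graph.dist u t ≤ X.graph.dist u s + X.graph.dist s t := X.conn.dist_triangle
  have e1 : X.graph.dist u s = 1 := X.dist_adj h1
  have e2 : X.graph.dist s t = 1 := X.dist_adj h2
  have t0 : X.graph.dist u t ≠ 0 := fun h0 => hne (X.dist0 h0)
  have t2 : X.graph.dist u t ≠ 1 := fun h0 => hna (SimpleGraph.dist_eq_one_iff_adj.mp h0)
  omega

/-- distances across a crossing edge of the hyperplane of (a,b). -/
lemma cross_type {a b x z : X.V} (hab : X.graph.Adj a b)
    (hx : X.graph.dist x a + 1 = X.graph.dist x b)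
    (hz : X.graph.dist z b + 1 = X.graph.dist z a)
    (hxz : X.graph.Adj x z) :
    X.graph.dist z b = X.graph.dist x a ∧ X.graph.dist z a = X.graph.dist x a + 1 := by
  have p1 := X.parity hxz a
  have p2 := X.parity hxz b
  have c1 : X.graph.dist a x = X.graph.dist x a := SimpleGraph.dist_comm
  have c2 : X.graph.dist a z = X.graph.dist z a := SimpleGraph.dist_comm
  have c3 : X.graph.dist b x = X.graph.dist x b := SimpleGraph.dist_comm
  have c4 : X.graph.dist b z = X.graph.dist z b := SimpleGraph.dist_comm
  omega

/-- a neighbour of an `a`-side vertex which is strictly closer to `a` is on the `a`-side. -/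
lemma type_down {a b x m : X.V} (hab : X.graph.Adj a b)
    (hxm : X.graph.Adj x m)
    (hx : X.graph.dist x a + 1 = X.graph.dist x b)
    (hma : X.graph.dist m a + 1 = X.graph.dist x a) :
    X.graph.dist m a + 1 = X.graph.dist m b := by
  have p1 := X.parity hab m
  have p2 := X.parity hxm b
  have c1 : X.graph.dist b x = X.graph.dist x b := SimpleGraph.dist_comm
  have c2 : X.graph.dist b m = X.graph.dist m b := SimpleGraph.dist_comm
  omega

/-- the median of x, y, p for d(x,y) = 2 and d(x,p) = d(y,p) is a common
neighbour of x and y which is strictly closer to p. -/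
lemma exists_common_nbr (x y p : X.V) (hxy : X.graph.dist x y = 2)
    (heq : X.graph.dist x p = X.graph.dist y p) :
    ∃ m : X.V, X.graph.dist x m = 1 ∧ X.graph.dist m y = 1 ∧
      X.graph.dist m p + 1 = X.graph.dist x p := by
  obtain ⟨m, ⟨h1, h2, h3⟩, -⟩ := X.median x y p
  rw [hxy] at h1
  have hmx : X.graph.dist x m ≠ 0 := by
    intro h0
    have e : x = m := X.dist0 h0
    rw [← e] at h2
    have : X.graph.dist y x = 2 := by rw [SimpleGraph.dist_comm]; exact hxy
    omega
  have hmy : X.graph.dist m y ≠ 0 := by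
    intro h0
    have e : m = y := X.dist0 h0
    rw [e] at h3
    omega
  exact ⟨m, by omega, by omega, by omega⟩


/-- Rank-2 lemma (no `K_{2,3}`): there is no path x - z - y with x, y on the
`a`-side of the hyperplane of (a,b), z on the `b`-side, and d(x,y) = 2. -/
lemma rank2 {a b x y z : X.V} (hab : X.graph.Adj a b)
    (hx : X.graph.dist x a + 1 = X.graph.dist x b)
    (hy : X.graph.dist y a + 1 = X.graph.dist y b)
    (hz : X.graph.dist z b + 1 = X.graph.dist z a)
    (hzx : X.graph.Adj z x) (hzy : X.graph.Adj z y)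
    (hxy : X.graph.dist x y = 2) : False := by
  obtain ⟨exb, exa⟩ := X.cross_type hab hx hz hzx.symm
  obtain ⟨eyb, eya⟩ := X.cross_type hab hy hz hzy.symm
  -- the common value α = d x a = d y a = d z b
  have halpha : X.graph.dist x a ≠ 0 := by
    intro h0
    have e1 : x = a := X.dist0 h0
    have e2 : y = a := X.dist0 (by omega)
    rw [e1, e2] at hxy
    simp [SimpleGraph.dist_self] at hxy
  -- w: common neighbour of x and y on the a-side
  obtain ⟨w, hxw, hwy, hwa⟩ := X.exists_common_nbr x y a hxy (by omega)
  have haxw : X.graph.Adj x w := SimpleGraph.dist_eq_one_iff_adj.mp hxw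
  have hwA : X.graph.dist w a + 1 = X.graph.dist w b := X.type_down hab haxw hx hwa
  have hwb : X.graph.dist w b = X.graph.dist x a := by omega
  have hwz : w ≠ z := by intro e; rw [e] at hwa; omega
  have hzw2 : X.graph.dist z w = 2 := by
    refine X.dist_two hzx haxw (fun e => hwz e.symm) fun hadj => ?_
    exact X.not_adj2 (c := a) (by omega) hadj.symm
  -- mu: common neighbour of z and w on the b-side
  obtain ⟨mu, hzmu, hmuw, hmub⟩ := X.exists_common_nbr z w b hzw2 (by omega)
  have hazmu : X.graph.Adj z mu := SimpleGraph.dist_eq_one_iff_adj.mp hzmu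
  have hamuw : X.graph.Adj mu w := SimpleGraph.dist_eq_one_iff_adj.mp hmuw
  have hmua : X.graph.dist mu a = X.graph.dist x a := by
    have p1 := X.parity hazmu a
    have p2 := X.parity hamuw a
    have c1 : X.graph.dist a z = X.graph.dist z a := SimpleGraph.dist_comm
    have c2 : X.graph.dist a mu = X.graph.dist mu a := SimpleGraph.dist_comm
    have c3 : X.graph.dist a w = X.graph.dist w a := SimpleGraph.dist_comm
    omega
  -- mu is at distance 2 from both x and y
  have hxmu : X.graph.dist x mu = 2 := by
    refine X.dist_two hzx.symm hazmu (fun e => ?_) fun hadj => ?_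
    · rw [← e] at hmub; omega
    · exact X.not_adj2 (c := b) (by omega) hadj.symm
  have hymu : X.graph.dist y mu = 2 := by
    refine X.dist_two hzy.symm hazmu (fun e => ?_) fun hadj => ?_
    · rw [← e] at hmub; omega
    · exact X.not_adj2 (c := b) (by omega) hadj.symm
  -- both z and w are medians of (x, y, mu): contradiction with uniqueness
  obtain ⟨m, -, hu⟩ := X.median x y mu
  have czx : X.graph.dist x z = 1 := by rw [SimpleGraph.dist_comm]; exact X.dist_adj hzx
  have czy : X.graph.dist z y = 1 := X.dist_adj hzy
  have cyz : X.graph.dist y z = 1 := X.dist_adj hzy.symm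
  have cwmu : X.graph.dist w mu = 1 := by rw [SimpleGraph.dist_comm]; exact hmuw
  have cyw : X.graph.dist y w = 1 := by rw [SimpleGraph.dist_comm]; exact hwy
  have e1 : z = m := hu z ⟨by omega, by omega, by omega⟩
  have e2 : w = m := hu w ⟨by omega, by omega, by omega⟩
  have e : z = w := e1.trans e2.symm
  rw [e] at exa
  omega


/-- Descent: given x on the a-side adjacent to z on the b-side with z between
x and the a-side vertex y, produce a configuration of the same kind strictly
closer to y. -/
lemma step_down {a b x z y : X.V} (hab : X.graph.Adj a b)
    (hx : X.graph.dist x a + 1 = X.graph.dist x b)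
    (hy : X.graph.dist y a + 1 = X.graph.dist y b)
    (hz : X.graph.dist z b + 1 = X.graph.dist z a)
    (hxz : X.graph.Adj x z)
    (hI : X.graph.dist x y = X.graph.dist z y + 1) : ∃ w u : X.V,
      X.graph.dist w a + 1 = X.graph.dist w b ∧
      X.graph.dist u b + 1 = X.graph.dist u a ∧
      X.graph.Adj w u ∧
      X.graph.dist w y = X.graph.dist u y + 1 ∧
      X.graph.dist u y + 1 = X.graph.dist z y := by
  obtain ⟨ezb, eza⟩ := X.cross_type hab hx hz hxz
  have hzy0 : X.graph.dist z y ≠ 0 := by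
    intro h0
    have e : z = y := X.dist0 h0
    rw [e] at hz
    omega
  obtain ⟨P, ⟨q1, q2, q3⟩, -⟩ := X.median z y b
  by_cases hP : X.graph.dist z P = 0
  · -- P = z : z lies between y and b
    have e : z = P := X.dist0 hP
    rw [← e] at q2
    have cyz : X.graph.dist y z = X.graph.dist z y := SimpleGraph.dist_comm
    -- w0 := median (x, y, a) is adjacent to x, on the a-side, with d(w0,y) = d(z,y)
    obtain ⟨w0, ⟨m1, m2, m3⟩, -⟩ := X.median x y a
    have cyw0 : X.graph.dist y w0 = X.graph.dist w0 y := SimpleGraph.dist_comm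
    have hxw0 : X.graph.dist x w0 = 1 := by omega
    have hw0a : X.graph.dist w0 a + 1 = X.graph.dist x a := by omega
    have hw0y : X.graph.dist w0 y = X.graph.dist z y := by omega
    have haxw0 : X.graph.Adj x w0 := SimpleGraph.dist_eq_one_iff_adj.mp hxw0
    have hw0A : X.graph.dist w0 a + 1 = X.graph.dist w0 b := X.type_down hab haxw0 hx hw0a
    have hw0z : w0 ≠ z := by intro e'; rw [e'] at hw0a; omega
    have hzw02 : X.graph.dist z w0 = 2 := by
      refine X.dist_two hxz.symm haxw0 (fun e' => hw0z e'.symm) fun hadj => ?_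
      exact X.not_adj2 (c := a) (by omega) hadj.symm
    -- u := median (w0, z, y) is a common neighbour of w0 and z closer to y
    obtain ⟨u, ⟨n1, n2, n3⟩, -⟩ := X.median w0 z y
    have cw0z : X.graph.dist w0 z = 2 := by rw [SimpleGraph.dist_comm]; exact hzw02
    rw [cw0z] at n1
    have hw0u : X.graph.dist w0 u ≠ 0 := by
      intro h0
      have e' : w0 = u := X.dist0 h0
      rw [← e'] at n2
      omega
    have huz : X.graph.dist u z ≠ 0 := by
      intro h0
      have e' : u = z := X.dist0 h0
      rw [e'] at n3
      omega
    have hw0u1 : X.graph.dist w0 u = 1 := by omega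
    have huz1 : X.graph.dist u z = 1 := by omega
    have huy : X.graph.dist u y + 1 = X.graph.dist z y := by omega
    have haw0u : X.graph.Adj w0 u := SimpleGraph.dist_eq_one_iff_adj.mp hw0u1
    have hauz : X.graph.Adj u z := SimpleGraph.dist_eq_one_iff_adj.mp huz1
    have hua : X.graph.dist u a = X.graph.dist x a := by
      have p1 := X.parity haw0u a
      have p2 := X.parity hauz a
      have c1 : X.graph.dist a w0 = X.graph.dist w0 a := SimpleGraph.dist_comm
      have c2 : X.graph.dist a u = X.graph.dist u a := SimpleGraph.dist_comm
      have c3 : X.graph.dist a z = X.graph.dist z a := SimpleGraph.dist_comm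
      omega
    rcases X.parity hab u with huA | huB
    · -- u on the a-side : contradiction via rank2
      exfalso
      have hxu2 : X.graph.dist x u = 2 := by
        refine X.dist_two hxz hauz.symm (fun e' => ?_) fun hadj => ?_
        · rw [← e'] at huy; omega
        · exact X.not_adj0 (c := a) (by omega) hadj
      exact X.rank2 hab hx huA hz hxz.symm hauz.symm hxu2
    · exact ⟨w0, u, hw0A, huB, haw0u, by omega, huy⟩
  · -- P ≠ z : step from z towards b inside I(z,y)
    have halpha : 1 ≤ X.graph.dist z b := by omega
    obtain ⟨r, hzr, hrP⟩ := X.exists_step hP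
    have hzr1 : X.graph.dist z r = 1 := X.dist_adj hzr
    have hrb : X.graph.dist r b + 1 = X.graph.dist z b := by
      have t1 : X.graph.dist r b ≤ X.graph.dist r P + X.graph.dist P b := X.conn.dist_triangle
      have t2 : X.graph.dist z b ≤ X.graph.dist z r + X.graph.dist r b := X.conn.dist_triangle
      omega
    have hry : X.graph.dist r y + 1 = X.graph.dist z y := by
      have t1 : X.graph.dist r y ≤ X.graph.dist r P + X.graph.dist P y := X.conn.dist_triangle
      have t2 : X.graph.dist z y ≤ X.graph.dist z r + X.graph.dist r y := X.conn.dist_triangle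
      omega
    have hra : X.graph.dist r a = X.graph.dist x a := by
      have p1 := X.parity hzr a
      have p2 := X.parity hab r
      have c1 : X.graph.dist a z = X.graph.dist z a := SimpleGraph.dist_comm
      have c2 : X.graph.dist a r = X.graph.dist r a := SimpleGraph.dist_comm
      omega
    have hrB : X.graph.dist r b + 1 = X.graph.dist r a := by omega
    have hxr2 : X.graph.dist x r = 2 := by
      refine X.dist_two hxz hzr (fun e' => ?_) fun hadj => ?_
      · rw [e'] at hx; omega
      · exact X.not_adj2 (c := b) (by omega) hadj.symm
    -- w := common neighbour of x and r on the a-side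
    obtain ⟨w, hxw, hwr, hwa⟩ := X.exists_common_nbr x r a hxr2 (by omega)
    have haxw : X.graph.Adj x w := SimpleGraph.dist_eq_one_iff_adj.mp hxw
    have hawr : X.graph.Adj w r := SimpleGraph.dist_eq_one_iff_adj.mp hwr
    have hwA : X.graph.dist w a + 1 = X.graph.dist w b := X.type_down hab haxw hx hwa
    have hwy : X.graph.dist w y = X.graph.dist r y + 1 := by
      have t1 : X.graph.dist w y ≤ X.graph.dist w r + X.graph.dist r y := X.conn.dist_triangle
      have t2 : X.graph.dist x y ≤ X.graph.dist x w + X.graph.dist w y := X.conn.dist_triangle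
      omega
    exact ⟨w, r, hwA, hrB, hawr, hwy, hry⟩


/-- No b-side vertex adjacent to an a-side vertex x lies between x and an
a-side vertex y. -/
lemma no_between_adj {a b : X.V} (hab : X.graph.Adj a b) :
    ∀ (k : ℕ) (x z y : X.V), X.graph.dist z y = k →
      X.graph.dist x a + 1 = X.graph.dist x b →
      X.graph.dist y a + 1 = X.graph.dist y b →
      X.graph.dist z b + 1 = X.graph.dist z a →
      X.graph.Adj x z →
      X.graph.dist x y = X.graph.dist z y + 1 → False := by
  intro k
  induction k using Nat.strong_induction_on with
  | _ k IH =>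
    intro x z y hk hx hy hz hxz hI
    obtain ⟨w, u, hwA, huB, hwu, hwy, huy⟩ := X.step_down hab hx hy hz hxz hI
    exact IH (X.graph.dist u y) (by omega) w u y rfl hwA hy huB hwu hwy

/-- Convexity of halfspaces: no b-side vertex lies between two a-side vertices. -/
lemma halfspace_convex {a b : X.V} (hab : X.graph.Adj a b) :
    ∀ (n : ℕ) (x z y : X.V), X.graph.dist x z = n →
      X.graph.dist x a + 1 = X.graph.dist x b →
      X.graph.dist y a + 1 = X.graph.dist y b →
      X.graph.dist z b + 1 = X.graph.dist z a →
      X.graph.dist x z + X.graph.dist z y = X.graph.dist x y → False := by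
  intro n
  induction n using Nat.strong_induction_on with
  | _ n IH =>
    intro x z y hn hx hy hz hI
    have hxz0 : X.graph.dist x z ≠ 0 := by
      intro h0
      have e : x = z := X.dist0 h0
      rw [e] at hx
      omega
    have hzx0 : X.graph.dist z x ≠ 0 := by
      rw [SimpleGraph.dist_comm]; exact hxz0
    obtain ⟨p, hzp, hpx⟩ := X.exists_step hzx0
    have czx : X.graph.dist z x = X.graph.dist x z := SimpleGraph.dist_comm
    have cxp : X.graph.dist x p = X.graph.dist p x := SimpleGraph.dist_comm
    have hzp1 : X.graph.dist z p = 1 := X.dist_adj hzp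
    have cpz : X.graph.dist p z = 1 := X.dist_adj hzp.symm
    have hpy : X.graph.dist p y = X.graph.dist z y + 1 ∧
        X.graph.dist x p + X.graph.dist p y = X.graph.dist x y := by
      have t1 : X.graph.dist p y ≤ X.graph.dist p z + X.graph.dist z y := X.conn.dist_triangle
      have t2 : X.graph.dist x y ≤ X.graph.dist x p + X.graph.dist p y := X.conn.dist_triangle
      omega
    rcases X.parity hab p with hpA | hpB
    · exact X.no_between_adj hab (X.graph.dist z y) p z y rfl hpA hy hz hzp.symm hpy.1
    · exact IH (X.graph.dist x p) (by omega) x p y rfl hx hy hpB hpy.2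

/-- gate property of the nearest b-side vertex. -/
lemma gate {a b : X.V} (hab : X.graph.Adj a b) (v x₀ : X.V)
    (hx₀ : X.graph.dist x₀ b < X.graph.dist x₀ a)
    (hmin : ∀ m : X.V, X.graph.dist m b < X.graph.dist m a →
      X.graph.dist v x₀ ≤ X.graph.dist v m) :
    ∀ y : X.V, X.graph.dist y b < X.graph.dist y a →
      X.graph.dist v y = X.graph.dist v x₀ + X.graph.dist x₀ y := by
  intro y hy
  have hx₀' : X.graph.dist x₀ b + 1 = X.graph.dist x₀ a := by
    rcases X.parity hab x₀ with h | h <;> omega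
  have hy' : X.graph.dist y b + 1 = X.graph.dist y a := by
    rcases X.parity hab y with h | h <;> omega
  obtain ⟨m, ⟨g1, g2, g3⟩, -⟩ := X.median v x₀ y
  have hmB : X.graph.dist m b + 1 = X.graph.dist m a := by
    rcases X.parity hab m with h | h
    · exfalso
      exact X.halfspace_convex hab.symm (X.graph.dist x₀ m) x₀ m y rfl hx₀' hy' h g2
    · exact h
  have hle : X.graph.dist v x₀ ≤ X.graph.dist v m := hmin m (by omega)
  have e : m = x₀ := X.dist0 (by omega)
  rw [e] at g3
  omega

/-- the heart of the separation argument. -/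
lemma sep_aux {a b : X.V} (hab : X.graph.Adj a b) (v x₀ v' : X.V)
    (hv : X.graph.dist v a + 1 = X.graph.dist v b)
    (hgate : ∀ y : X.V, X.graph.dist y b < X.graph.dist y a →
      X.graph.dist v y = X.graph.dist v x₀ + X.graph.dist x₀ y)
    (hvv' : X.graph.Adj v v')
    (hv'A : X.graph.dist v' a + 1 = X.graph.dist v' b)
    (hv'x₀ : X.graph.dist v' x₀ + 1 = X.graph.dist v x₀)
    (u w : X.V)
    (hu : X.graph.dist u a + 1 = X.graph.dist u b)
    (hw : X.graph.dist w b + 1 = X.graph.dist w a)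
    (huw : X.graph.Adj u w) :
    X.graph.dist u v' < X.graph.dist u v ∧ X.graph.dist w v' < X.graph.dist w v := by
  have gw : X.graph.dist v w = X.graph.dist v x₀ + X.graph.dist x₀ w := hgate w (by omega)
  have cwv : X.graph.dist w v = X.graph.dist v w := SimpleGraph.dist_comm
  have cwx₀ : X.graph.dist w x₀ = X.graph.dist x₀ w := SimpleGraph.dist_comm
  have cx₀v' : X.graph.dist x₀ v' = X.graph.dist v' x₀ := SimpleGraph.dist_comm
  have cv'w : X.graph.dist v' w = X.graph.dist w v' := SimpleGraph.dist_comm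
  have cvv' : X.graph.dist v v' = 1 := X.dist_adj hvv'
  have hwv' : X.graph.dist w v' + 1 = X.graph.dist w v := by
    have t1 : X.graph.dist w v' ≤ X.graph.dist w x₀ + X.graph.dist x₀ v' :=
      X.conn.dist_triangle
    have t2 : X.graph.dist v w ≤ X.graph.dist v v' + X.graph.dist v' w :=
      X.conn.dist_triangle
    have t3 : X.graph.dist v x₀ ≤ X.graph.dist v' x₀ + 1 := by
      have := X.conn.dist_triangle (u := v) (v := v') (w := x₀)
      omega
    omega
  have cwu : X.graph.dist w u = 1 := X.dist_adj huw.symm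
  have cuv : X.graph.dist u v = X.graph.dist v u := SimpleGraph.dist_comm
  have hvu : X.graph.dist v u + 1 = X.graph.dist v w := by
    rcases X.parity huw v with h | h
    · exact h
    · exfalso
      exact X.halfspace_convex hab (X.graph.dist v w) v w u rfl hv hu hw (by omega)
  have huv' : X.graph.dist u v' + 1 = X.graph.dist u v := by
    rcases X.parity hvv' u with h | h
    · exfalso
      have cuv' : X.graph.dist u v' = X.graph.dist v' u := SimpleGraph.dist_comm
      exact X.halfspace_convex hab (X.graph.dist v' w) v' w u rfl hv'A hu hw (by omega)
    · exact h
  omega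

/-- **Lemma 4.5 of the paper**: if `X` is a CAT(0) cube complex, `ṽ` a vertex
and `H` a hyperplane (dual to the edge `(a,b)`, with `ṽ` on the `a`-side)
with `d(ṽ, H) ≥ 3/2` (i.e. `hDist ṽ a b ≥ 1`), then there is a hyperplane
`H'` (dual to an edge `(a',b')`, with `ṽ` on the `a'`-side) with
`d(ṽ, H') = 1/2` which separates `ṽ` from `H`: `ṽ` lies in one halfspace of
`H'` and the whole hyperplane `H` (every edge dual to it) lies in the other. -/
theorem exists_separating_hyperplane_near_vertex (X : CCC) (v a b : X.V)
    (hab : X.graph.Adj a b) (hside : X.SideOf a b v) (hd : 1 ≤ X.hDist v a b) :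
    ∃ a' b' : X.V, X.graph.Adj a' b' ∧ X.SideOf a' b' v ∧ X.hDist v a' b' = 0 ∧
      ∀ u w : X.V, X.UDual u w a b → X.SideOf b' a' u ∧ X.SideOf b' a' w := by
  have hside' : X.graph.dist v a < X.graph.dist v b := hside
  have hvA : X.graph.dist v a + 1 = X.graph.dist v b := by
    rcases X.parity hab v with h | h <;> omega
  have hd' : 1 ≤ sInf {n | ∃ x : X.V, X.SideOf b a x ∧ X.graph.dist v x = n} - 1 := hd
  have hSne : ({n | ∃ x : X.V, X.SideOf b a x ∧ X.graph.dist v x = n} : Set ℕ).Nonempty := by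
    refine ⟨X.graph.dist v b, b, ?_, rfl⟩
    show X.graph.dist b b < X.graph.dist b a
    rw [SimpleGraph.dist_self, X.dist_adj hab.symm]
    omega
  obtain ⟨x₀, hx₀B, hx₀d⟩ := Nat.sInf_mem hSne
  have hx₀B' : X.graph.dist x₀ b < X.graph.dist x₀ a := hx₀B
  have hmin : ∀ m : X.V, X.graph.dist m b < X.graph.dist m a →
      X.graph.dist v x₀ ≤ X.graph.dist v m := by
    intro m hm
    have hmem : X.graph.dist v m ∈
        {n | ∃ x : X.V, X.SideOf b a x ∧ X.graph.dist v x = n} := ⟨m, hm, rfl⟩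
    have := Nat.sInf_le hmem
    omega
  have hgate := X.gate hab v x₀ hx₀B' hmin
  have hD2 : 2 ≤ X.graph.dist v x₀ := by omega
  obtain ⟨v', hvv', hv'x₀⟩ := X.exists_step (u := v) (w := x₀) (by omega)
  have hvv'1 : X.graph.dist v v' = 1 := X.dist_adj hvv'
  have hv'A : X.graph.dist v' a + 1 = X.graph.dist v' b := by
    rcases X.parity hab v' with h | h
    · exact h
    · exfalso
      have h2 := hmin v' (by omega)
      omega
  refine ⟨v, v', hvv', ?_, ?_, ?_⟩
  · show X.graph.dist v v < X.graph.dist v v'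
    rw [SimpleGraph.dist_self, hvv'1]
    omega
  · show sInf {n | ∃ x : X.V, X.SideOf v' v x ∧ X.graph.dist v x = n} - 1 = 0
    have h1 : (1 : ℕ) ∈ {n | ∃ x : X.V, X.SideOf v' v x ∧ X.graph.dist v x = n} := by
      refine ⟨v', ?_, hvv'1⟩
      show X.graph.dist v' v' < X.graph.dist v' v
      rw [SimpleGraph.dist_self]
      have : X.graph.dist v' v = 1 := X.dist_adj hvv'.symm
      omega
    have := Nat.sInf_le h1
    omega
  · intro u w h
    rcases h with ⟨huw, -, hu, hw⟩ | ⟨huw, -, hu, hw⟩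
    · exact X.sep_aux hab v x₀ v' hvA hgate hvv' hv'A hv'x₀ u w hu hw huw
    · have := X.sep_aux hab v x₀ v' hvA hgate hvv' hv'A hv'x₀ w u hw hu huw.symm
      exact ⟨this.2, this.1⟩

end CCC
end
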